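/- Let ζ be a Pisot number of degree k ≥ 2. If σ̲(1,ζ) = 1/(k−1), then ζ is a Pisot unit. -/

import Mathlib

open Filter Polynomial

attribute [-instance] Field.toEuclideanDomain

set_option maxHeartbeats 1000000
set_option synthInstance.maxHeartbeats 400000

/-- Distance from a real number to the nearest integer. -/
noncomputable def nearestDist (x : ℝ) : ℝ := |x - round x|

open Classical in
/-- `σ_n(α,ζ) = -log‖αζⁿ‖/(n log ζ)`, valued in `(-∞,∞]`, with value `∞` when `αζⁿ ∈ ℤ`. -/
noncomputable def sigmaFn (α ζ : ℝ) (n : ℕ) : EReal :=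
  if ∃ m : ℤ, α * ζ ^ n = (m : ℝ) then ⊤
  else ((-(Real.log (nearestDist (α * ζ ^ n)) / (n * Real.log ζ)) : ℝ) : EReal)

/-- `σ̲(α,ζ) = liminf σ_n(α,ζ)`. -/
noncomputable def sigmaLower (α ζ : ℝ) : EReal := Filter.liminf (sigmaFn α ζ) Filter.atTop

/-- `σ̄(α,ζ) = limsup σ_n(α,ζ)`. -/
noncomputable def sigmaUpper (α ζ : ℝ) : EReal := Filter.limsup (sigmaFn α ζ) Filter.atTop

/-- A Pisot number: a real algebraic integer `ζ > 1` all of whose conjugates other than `ζ`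
itself have absolute value strictly less than 1. -/
def IsPisot (ζ : ℝ) : Prop :=
  1 < ζ ∧ IsIntegral ℤ ζ ∧
    ∀ z : ℂ, Polynomial.aeval z (minpoly ℚ ζ) = 0 → z ≠ (ζ : ℂ) → ‖z‖ < 1

/-- A Pisot unit: a Pisot number which is a unit in the ring of algebraic integers,
equivalently the constant coefficient of its monic minimal polynomial over `ℤ` is `±1`. -/
def IsPisotUnit (ζ : ℝ) : Prop :=
  IsPisot ζ ∧ ((minpoly ℤ ζ).coeff 0 = 1 ∨ (minpoly ℤ ζ).coeff 0 = -1)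

/-- Vandermonde-based lower bound for power sums of distinct complex numbers. -/
lemma vand_power_sum_lb {m : ℕ} (hm : 0 < m) (v : Fin m → ℂ) (hv : Function.Injective v)
    (j₀ : Fin m) :
    ∃ C : ℝ, 0 < C ∧ ∀ n : ℕ, ∃ i : Fin m,
      ‖v j₀‖ ^ n ≤ C * ‖∑ j, v j ^ (n + (i : ℕ))‖ := by
  classical
  haveI : NeZero m := ⟨hm.ne'⟩
  set V : Matrix (Fin m) (Fin m) ℂ := (Matrix.vandermonde v).transpose with hV
  have hdet : V.det ≠ 0 := by
    rw [hV, Matrix.det_transpose]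
    exact Matrix.det_vandermonde_ne_zero_iff.2 hv
  set B := V⁻¹ with hB
  set c : ℝ := ∑ i, ‖B j₀ i‖ with hc
  have hc0 : 0 ≤ c := Finset.sum_nonneg fun i _ => norm_nonneg _
  refine ⟨m * c + 1, by positivity, ?_⟩
  intro n
  have key : (fun j => v j ^ n) = B.mulVec (fun i : Fin m => ∑ j, v j ^ (n + (i : ℕ))) := by
    have h1 : V.mulVec (fun j => v j ^ n) = fun i : Fin m => ∑ j, v j ^ (n + (i : ℕ)) := by
      funext i
      simp [Matrix.mulVec, dotProduct, hV, Matrix.vandermonde, pow_add, mul_comm]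
    rw [← h1, Matrix.mulVec_mulVec, hB,
      Matrix.nonsing_inv_mul V (isUnit_iff_ne_zero.2 hdet), Matrix.one_mulVec]
  have h2 : ‖v j₀‖ ^ n ≤
      ∑ i, ‖B j₀ i‖ * ‖∑ j, v j ^ (n + (i : ℕ))‖ := by
    calc ‖v j₀‖ ^ n = ‖v j₀ ^ n‖ := by rw [norm_pow]
    _ = ‖∑ i, B j₀ i * (∑ j, v j ^ (n + (i : ℕ)))‖ := by
        rw [congrFun key j₀]; rfl
    _ ≤ ∑ i, ‖B j₀ i * (∑ j, v j ^ (n + (i : ℕ)))‖ :=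
        norm_sum_le _ _
    _ = _ := by simp [map_mul]
  have h3 : ∑ _i : Fin m, (‖v j₀‖ ^ n / m) ≤
      ∑ i, ‖B j₀ i‖ * ‖∑ j, v j ^ (n + (i : ℕ))‖ := by
    rw [Finset.sum_const, Finset.card_univ, Fintype.card_fin, nsmul_eq_mul,
      mul_div_cancel₀]
    · exact h2
    · exact_mod_cast hm.ne'
  obtain ⟨i, _, hi⟩ := Finset.exists_le_of_sum_le (Finset.univ_nonempty) h3
  refine ⟨i, ?_⟩
  have hBc : ‖B j₀ i‖ ≤ c :=
    Finset.single_le_sum (f := fun i => ‖B j₀ i‖)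
      (fun i _ => norm_nonneg _) (Finset.mem_univ i)
  have habs : 0 ≤ ‖∑ j, v j ^ (n + (i : ℕ))‖ := norm_nonneg _
  have h4 : ‖v j₀‖ ^ n / m ≤ c * ‖∑ j, v j ^ (n + (i : ℕ))‖ :=
    hi.trans (mul_le_mul_of_nonneg_right hBc habs)
  have hm' : (0:ℝ) < m := by exact_mod_cast hm
  calc ‖v j₀‖ ^ n = m * (‖v j₀‖ ^ n / m) := by
        field_simp
  _ ≤ m * (c * ‖∑ j, v j ^ (n + (i : ℕ))‖) :=
        mul_le_mul_of_nonneg_left h4 hm'.le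
  _ = m * c * ‖∑ j, v j ^ (n + (i : ℕ))‖ := by ring
  _ ≤ (m * c + 1) * ‖∑ j, v j ^ (n + (i : ℕ))‖ := by nlinarith

lemma round_eq_of_abs_sub_lt_half {x : ℝ} {t : ℤ} (h : |x - t| < 1/2) : round x = t := by
  rw [round_eq, Int.floor_eq_iff]
  rw [abs_lt] at h
  constructor
  · push_cast; linarith [h.1, h.2]
  · push_cast; linarith [h.1, h.2]

open IntermediateField in
/-- If a Pisot number `ζ` of degree `k ≥ 2` satisfies `σ̲(1,ζ) = 1/(k−1)`,
then `ζ` is a Pisot unit. -/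
theorem pisot_sigmaLower_eq_inv_imp_unit (ζ : ℝ) (k : ℕ) (hP : IsPisot ζ) (hk : 2 ≤ k)
    (hdeg : (minpoly ℚ ζ).natDegree = k)
    (hσ : sigmaLower 1 ζ = (((1 : ℝ) / ((k : ℝ) - 1)) : EReal)) :
    IsPisotUnit ζ := by
  classical
  obtain ⟨hζ1, hint, hconj⟩ := hP
  have hζ0 : (0:ℝ) < ζ := lt_trans one_pos hζ1
  have hQint : IsIntegral ℚ ζ := hint.tower_top
  haveI : FiniteDimensional ℚ ℚ⟮ζ⟯ := IntermediateField.adjoin.finiteDimensional hQint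
  set g : ℚ⟮ζ⟯ := AdjoinSimple.gen ℚ ζ with hg
  have hvalg : algebraMap ℚ⟮ζ⟯ ℝ g = ζ := AdjoinSimple.algebraMap_gen ℚ ζ
  set pb := IntermediateField.adjoin.powerBasis hQint with hpb
  have hpbg : pb.gen = g := rfl
  set σ₀ : ℚ⟮ζ⟯ →ₐ[ℚ] ℂ :=
    (Complex.ofRealAm.restrictScalars ℚ).comp
      ((IsScalarTower.toAlgHom ℚ ℚ⟮ζ⟯ ℝ)) with hσ₀
  have hσ₀g : σ₀ g = (ζ : ℂ) := by simp [hσ₀, hvalg]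
  have hinj : Function.Injective (fun σ : ℚ⟮ζ⟯ →ₐ[ℚ] ℂ => σ g) := by
    intro σ τ h
    exact pb.algHom_ext h
  have hcard : Fintype.card (ℚ⟮ζ⟯ →ₐ[ℚ] ℂ) = k := by
    rw [AlgHom.card, IntermediateField.adjoin.finrank hQint, hdeg]
  -- the other embeddings
  set T : Finset (ℚ⟮ζ⟯ →ₐ[ℚ] ℂ) := Finset.univ.erase σ₀ with hT
  set m : ℕ := T.card with hm
  have hmk : m + 1 = k := by
    rw [hm, hT, Finset.card_erase_of_mem (Finset.mem_univ _), Finset.card_univ, hcard]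
    omega
  have hm1 : 1 ≤ m := by omega
  set e := T.equivFin with he
  set v : Fin m → ℂ := fun j => (e.symm j : ℚ⟮ζ⟯ →ₐ[ℚ] ℂ) g with hv
  have hvmem : ∀ j : Fin m, ((e.symm j : _) : ℚ⟮ζ⟯ →ₐ[ℚ] ℂ) ∈ T := fun j => (e.symm j).2
  have hvinj : Function.Injective v := by
    intro a b h
    have h2 : ((e.symm a : _) : ℚ⟮ζ⟯ →ₐ[ℚ] ℂ) = (e.symm b : _) := hinj h
    exact e.symm.injective (Subtype.ext h2)
  have hvroot : ∀ j, Polynomial.aeval (v j) (minpoly ℚ ζ) = 0 := by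
    intro j
    have h1 : minpoly ℚ g = minpoly ℚ ζ := minpoly_gen ℚ ζ
    have h2 : Polynomial.aeval g (minpoly ℚ ζ) = 0 := by rw [← h1]; exact minpoly.aeval ℚ g
    have := Polynomial.aeval_algHom_apply ((e.symm j : _) : ℚ⟮ζ⟯ →ₐ[ℚ] ℂ) g (minpoly ℚ ζ)
    rw [h2, map_zero] at this
    exact this.symm ▸ this
  have hvne : ∀ j, v j ≠ (ζ : ℂ) := by
    intro j heq
    have h2 : ((e.symm j : _) : ℚ⟮ζ⟯ →ₐ[ℚ] ℂ) = σ₀ := hinj (by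
      show ((e.symm j : _) : ℚ⟮ζ⟯ →ₐ[ℚ] ℂ) g = σ₀ g
      rw [hσ₀g]; exact heq)
    exact (Finset.ne_of_mem_erase (hvmem j)) h2
  have hvlt : ∀ j, ‖v j‖ < 1 := fun j => hconj _ (hvroot j) (hvne j)
  have hg0 : g ≠ 0 := by
    intro h
    rw [h, map_zero] at hvalg
    linarith
  have hv0 : ∀ j, v j ≠ 0 := by
    intro j h
    exact hg0 ((map_eq_zero_iff ((e.symm j : _) : ℚ⟮ζ⟯ →ₐ[ℚ] ℂ).toRingHom
      (RingHom.injective _)).mp h)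
  -- maximal modulus
  obtain ⟨j₀, -, hj₀⟩ := Finset.exists_max_image Finset.univ (fun j => ‖v j‖)
    ⟨⟨0, by omega⟩, Finset.mem_univ _⟩
  set Θ : ℝ := ‖v j₀‖ with hΘ
  have hΘpos : 0 < Θ := norm_pos_iff.mpr (hv0 j₀)
  have hΘlt : Θ < 1 := hvlt j₀
  have hΘge : ∀ j, ‖v j‖ ≤ Θ := fun j => hj₀ j (Finset.mem_univ j)
  -- trace integrality and power sums
  have hgint : IsIntegral ℤ g := by
    refine (isIntegral_algebraMap_iff (algebraMap ℚ⟮ζ⟯ ℝ).injective).mp ?_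
    rwa [hvalg]
  have htr : ∀ n : ℕ, ∃ t : ℤ, ((t:ℝ):ℂ) = (ζ:ℂ)^n + ∑ j, v j ^ n := by
    intro n
    have hint_tr : IsIntegral ℤ (Algebra.trace ℚ ℚ⟮ζ⟯ (g ^ n)) :=
      Algebra.isIntegral_trace (hgint.pow n)
    obtain ⟨t, ht⟩ := IsIntegrallyClosed.isIntegral_iff.mp hint_tr
    refine ⟨t, ?_⟩
    have hsum : algebraMap ℚ ℂ (Algebra.trace ℚ ℚ⟮ζ⟯ (g ^ n)) =
        ∑ σ : ℚ⟮ζ⟯ →ₐ[ℚ] ℂ, σ (g ^ n) := trace_eq_sum_embeddings (E := ℂ)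
    have hsplit : ∑ σ : ℚ⟮ζ⟯ →ₐ[ℚ] ℂ, σ (g ^ n)
        = σ₀ (g ^ n) + ∑ σ ∈ T, σ (g ^ n) := by
      rw [hT]
      exact (Finset.add_sum_erase Finset.univ (fun σ => σ (g ^ n)) (Finset.mem_univ σ₀)).symm
    have hTsum : ∑ σ ∈ T, σ (g ^ n) = ∑ j, v j ^ n := by
      rw [← Finset.sum_coe_sort T (fun σ => σ (g ^ n)),
        ← Equiv.sum_comp e.symm (fun x => ((x : _) : ℚ⟮ζ⟯ →ₐ[ℚ] ℂ) (g ^ n))]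
      exact Finset.sum_congr rfl fun j _ => by rw [hv]; simp [map_pow]
    have hcast : ((t:ℝ):ℂ) = algebraMap ℚ ℂ (algebraMap ℤ ℚ t) := by push_cast; rfl
    rw [hcast, ht, hsum, hsplit, hTsum, map_pow, hσ₀g]
  choose tfun htfun using htr
  set s : ℕ → ℝ := fun n => (tfun n : ℝ) - ζ ^ n with hs
  have hsC : ∀ n, ((s n : ℝ) : ℂ) = ∑ j, v j ^ n := by
    intro n
    have h := htfun n
    rw [hs]
    push_cast at h ⊢
    linear_combination h
  have hsabs : ∀ n, |s n| = ‖∑ j, v j ^ n‖ := by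
    intro n
    rw [← hsC n, Complex.norm_real, Real.norm_eq_abs]
  have hsle : ∀ n, |s n| ≤ m * Θ ^ n := by
    intro n
    rw [hsabs n]
    calc ‖∑ j, v j ^ n‖ ≤ ∑ j, ‖v j ^ n‖ := norm_sum_le _ _
    _ ≤ ∑ _j : Fin m, Θ ^ n := Finset.sum_le_sum fun j _ => by
        rw [norm_pow]
        exact pow_le_pow_left₀ (norm_nonneg _) (hΘge j) n
    _ = m * Θ ^ n := by
        rw [Finset.sum_const, Finset.card_univ, Fintype.card_fin, nsmul_eq_mul]
  have hirr : ∀ n : ℕ, 1 ≤ n → ∀ t : ℤ, ζ ^ n ≠ (t : ℝ) := by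
    intro n hn t heq
    have hgpow : g ^ n = algebraMap ℚ ℚ⟮ζ⟯ (t : ℚ) := by
      apply (algebraMap ℚ⟮ζ⟯ ℝ).injective
      rw [map_pow, hvalg, heq, ← IsScalarTower.algebraMap_apply]
      push_cast
      rfl
    have hvt : v j₀ ^ n = ((t:ℚ) : ℂ) := by
      rw [hv]
      simp only
      rw [← map_pow, hgpow, AlgHom.commutes]
      rfl
    have h1 : ‖v j₀ ^ n‖ < 1 := by
      rw [norm_pow]
      exact pow_lt_one₀ (norm_nonneg _) hΘlt (by omega)
    rw [hvt] at h1
    have h2 : (1:ℝ) < ζ ^ n := one_lt_pow₀ hζ1 (by omega)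
    rw [heq] at h2
    have h3 : ‖((t:ℚ) : ℂ)‖ = |(t:ℝ)| := by
      rw [← Real.norm_eq_abs, ← Complex.norm_real]
      norm_cast
      rw [Int.norm_eq_abs, Int.cast_abs]
    rw [h3] at h1
    have := le_abs_self ((t:ℝ))
    linarith
  have hsne : ∀ n : ℕ, 1 ≤ n → s n ≠ 0 := by
    intro n hn h0
    rw [hs] at h0
    exact hirr n hn (tfun n) (by linarith [sub_eq_zero.mp h0])
  -- eventual description of sigmaFn
  have hζlog : 0 < Real.log ζ := Real.log_pos hζ1
  obtain ⟨N₀, hN₀⟩ : ∃ N₀ : ℕ, ∀ n ≥ N₀, (m:ℝ) * Θ ^ n < 1/2 := by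
    have ht : Tendsto (fun n : ℕ => (m:ℝ) * Θ ^ n) atTop (nhds 0) := by
      have := tendsto_pow_atTop_nhds_zero_of_lt_one hΘpos.le hΘlt
      simpa using this.const_mul (m:ℝ)
    have := ht.eventually_lt_const (show (0:ℝ) < 1/2 by norm_num)
    exact eventually_atTop.mp this
  have hsig : ∀ n : ℕ, 1 ≤ n → n ≥ N₀ →
      sigmaFn 1 ζ n = ((-(Real.log |s n| / (n * Real.log ζ)) : ℝ) : EReal) := by
    intro n h1 h2
    have hno : ¬ ∃ t : ℤ, (1:ℝ) * ζ ^ n = (t : ℝ) := by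
      rintro ⟨t, ht⟩
      rw [one_mul] at ht
      exact hirr n h1 t ht
    rw [sigmaFn, if_neg hno]
    congr 2
    have hrd : round ((1:ℝ) * ζ ^ n) = tfun n := by
      apply round_eq_of_abs_sub_lt_half
      rw [one_mul]
      have : |ζ ^ n - (tfun n : ℝ)| = |s n| := by rw [hs, abs_sub_comm]
      rw [this]
      exact lt_of_le_of_lt (hsle n) (hN₀ n h2)
    rw [nearestDist, hrd, one_mul, ← abs_sub_comm]
  -- the key frequent upper bound on sigmaFn
  obtain ⟨C, hCpos, hC⟩ := vand_power_sum_lb hm1 v hvinj j₀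
  set L : ℝ := -Real.log Θ / Real.log ζ with hL
  have hfreq : ∀ ε : ℝ, 0 < ε → ∃ᶠ p in atTop, sigmaFn 1 ζ p ≤ ((L + ε : ℝ) : EReal) := by
    intro ε hε
    obtain ⟨N₁, hN₁⟩ : ∃ N₁ : ℕ, ∀ n ≥ N₁, Real.log C / (n * Real.log ζ) < ε := by
      have ht : Tendsto (fun n : ℕ => Real.log C / (n * Real.log ζ)) atTop (nhds 0) := by
        have h := tendsto_const_div_atTop_nhds_zero_nat (Real.log C / Real.log ζ)
        refine h.congr fun n => ?_
        rw [div_div]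
        ring_nf
      exact eventually_atTop.mp (ht.eventually_lt_const hε)
    rw [frequently_atTop]
    intro a
    set n : ℕ := max (max N₀ 1) (max N₁ a) with hn
    have hnN₀ : n ≥ N₀ := le_trans (le_max_left _ _) (le_max_left _ _)
    have hn1 : 1 ≤ n := le_trans (le_max_right _ _) (le_max_left _ _)
    have hnN₁ : n ≥ N₁ := le_trans (le_max_left _ _) (le_max_right _ _)
    have hna : n ≥ a := le_trans (le_max_right _ _) (le_max_right _ _)
    obtain ⟨i, hi⟩ := hC n
    set p : ℕ := n + (i : ℕ) with hp
    have hpn : n ≤ p := Nat.le_add_right _ _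
    refine ⟨p, le_trans hna hpn, ?_⟩
    have hsp : |s p| ≠ 0 := abs_ne_zero.mpr (hsne p (le_trans hn1 hpn))
    have hsppos : 0 < |s p| := lt_of_le_of_ne (abs_nonneg _) (Ne.symm hsp)
    have hspbig : Θ ^ n ≤ C * |s p| := by rw [hsabs p]; exact hi
    have hsplt : |s p| < 1/2 := lt_of_le_of_lt (hsle p)
      (hN₀ p (le_trans hnN₀ hpn))
    -- logarithmic estimates
    have hlog1 : Real.log (Θ ^ n) ≤ Real.log C + Real.log |s p| := by
      have := Real.log_le_log (by positivity) hspbig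
      rwa [Real.log_mul hCpos.ne' hsp] at this
    have hlogΘ : Real.log (Θ ^ n) = (n:ℝ) * Real.log Θ := Real.log_pow Θ n
    have hlogsp_neg : Real.log |s p| < 0 :=
      Real.log_neg hsppos (by linarith)
    have hnpos : (0:ℝ) < n := by exact_mod_cast hn1
    have hppos : (0:ℝ) < p := by positivity
    have hple : (n:ℝ) ≤ (p:ℝ) := by exact_mod_cast hpn
    have hnum : 0 ≤ -Real.log |s p| := by linarith
    have step1 : -Real.log |s p| / ((p:ℝ) * Real.log ζ) ≤
        -Real.log |s p| / ((n:ℝ) * Real.log ζ) := by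
      rw [div_le_div_iff₀ (by positivity) (by positivity)]
      exact mul_le_mul_of_nonneg_left (mul_le_mul_of_nonneg_right hple hζlog.le) hnum
    have step2 : -Real.log |s p| / ((n:ℝ) * Real.log ζ) ≤
        (Real.log C - (n:ℝ) * Real.log Θ) / ((n:ℝ) * Real.log ζ) := by
      apply div_le_div_of_nonneg_right ?_ (by positivity)
      rw [hlogΘ] at hlog1
      linarith
    have step3 : (Real.log C - (n:ℝ) * Real.log Θ) / ((n:ℝ) * Real.log ζ) =
        L + Real.log C / ((n:ℝ) * Real.log ζ) := by
      rw [hL]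
      field_simp
      ring
    have step4 : L + Real.log C / ((n:ℝ) * Real.log ζ) ≤ L + ε := by
      have := hN₁ n hnN₁
      linarith
    have hfin : -(Real.log |s p| / ((p:ℝ) * Real.log ζ)) ≤ L + ε := by
      rw [← neg_div]
      linarith [step1, step2, step4, step3]
    rw [hsig p (le_trans hn1 hpn) (le_trans hnN₀ hpn)]
    exact_mod_cast EReal.coe_le_coe_iff.mpr hfin
  -- conclude : 1/(k-1) ≤ L
  have hmain : (1:ℝ)/((k:ℝ)-1) ≤ L := by
    refine le_of_forall_pos_le_add ?_
    intro ε hε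
    have h1 : sigmaLower 1 ζ ≤ ((L+ε:ℝ) : EReal) :=
      liminf_le_of_frequently_le' (hfreq ε hε)
    have hσ' : sigmaLower 1 ζ = (((1:ℝ)/((k:ℝ)-1) : ℝ) : EReal) := by
      rw [hσ, EReal.coe_div, EReal.coe_sub, EReal.coe_one]
    rw [hσ'] at h1
    exact EReal.coe_le_coe_iff.mp h1
  -- deduce Θ^m ≤ ζ⁻¹
  have hk1 : ((k:ℝ) - 1) = (m:ℝ) := by
    have : (k:ℝ) = (m:ℝ) + 1 := by exact_mod_cast hmk.symm
    linarith
  have hmpos : (0:ℝ) < m := by exact_mod_cast hm1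
  have hlogm : Real.log ζ ≤ (m:ℝ) * (-Real.log Θ) := by
    rw [hk1] at hmain
    rw [hL] at hmain
    rw [div_le_div_iff₀ hmpos hζlog] at hmain
    linarith
  have hΘm : Θ ^ m ≤ ζ⁻¹ := by
    have h1 : Real.log (Θ ^ m) ≤ Real.log ζ⁻¹ := by
      rw [Real.log_pow, Real.log_inv]
      push_cast
      nlinarith
    have h2 : (0:ℝ) < Θ ^ m := by positivity
    have h3 : (0:ℝ) < ζ⁻¹ := by positivity
    rwa [Real.log_le_log_iff h2 h3] at h1
  -- product of all conjugates is at most 1 in absolute value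
  have hprodv : ∏ j, ‖v j‖ ≤ Θ ^ m := by
    calc ∏ j, ‖v j‖ ≤ ∏ _j : Fin m, Θ :=
      Finset.prod_le_prod (fun j _ => norm_nonneg _) (fun j _ => hΘge j)
    _ = Θ ^ m := by rw [Finset.prod_const, Finset.card_univ, Fintype.card_fin]
  have hprodall : ‖∏ σ : ℚ⟮ζ⟯ →ₐ[ℚ] ℂ, σ g‖ ≤ 1 := by
    rw [norm_prod]
    have hsplit : ∏ σ : ℚ⟮ζ⟯ →ₐ[ℚ] ℂ, ‖σ g‖
        = ‖σ₀ g‖ * ∏ σ ∈ T, ‖σ g‖ := by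
      rw [hT]
      exact (Finset.mul_prod_erase Finset.univ
        (fun σ : ℚ⟮ζ⟯ →ₐ[ℚ] ℂ => ‖σ g‖) (Finset.mem_univ σ₀)).symm
    have hTprod : ∏ σ ∈ T, ‖σ g‖ = ∏ j, ‖v j‖ := by
      rw [← Finset.prod_coe_sort T (fun σ => ‖σ g‖),
        ← Equiv.prod_comp e.symm (fun x => ‖((x : _) : ℚ⟮ζ⟯ →ₐ[ℚ] ℂ) g‖)]
    rw [hsplit, hσ₀g, Complex.norm_real, Real.norm_eq_abs, abs_of_pos hζ0, hTprod]
    calc ζ * ∏ j, ‖v j‖ ≤ ζ * ζ⁻¹ :=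
      mul_le_mul_of_nonneg_left (le_trans hprodv hΘm) hζ0.le
    _ = 1 := mul_inv_cancel₀ hζ0.ne'
  -- norm bound
  have hnormeq : algebraMap ℚ ℂ (Algebra.norm ℚ g) = ∏ σ : ℚ⟮ζ⟯ →ₐ[ℚ] ℂ, σ g :=
    Algebra.norm_eq_prod_embeddings ℚ ℂ g
  have habsnorm : |(Algebra.norm ℚ g : ℚ)| ≤ 1 := by
    have h1 : ‖algebraMap ℚ ℂ (Algebra.norm ℚ g)‖ ≤ 1 := by
      rw [hnormeq]; exact hprodall
    have h2 : ‖algebraMap ℚ ℂ (Algebra.norm ℚ g)‖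
        = |((Algebra.norm ℚ g : ℚ) : ℝ)| := by
      rw [show (algebraMap ℚ ℂ) (Algebra.norm ℚ g)
          = (((Algebra.norm ℚ g : ℚ) : ℝ) : ℂ) by push_cast; rfl, Complex.norm_real, Real.norm_eq_abs]
    rw [h2] at h1
    have h3 : |((Algebra.norm ℚ g : ℚ) : ℝ)| = ((|(Algebra.norm ℚ g : ℚ)| : ℚ) : ℝ) := by
      push_cast
      rfl
    rw [h3] at h1
    exact_mod_cast h1
  have hnorm0 : Algebra.norm ℚ g ≠ 0 := by
    rw [Algebra.norm_ne_zero_iff]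
    exact hg0
  -- relate to the constant coefficient of the minimal polynomial
  have hpc : Algebra.norm ℚ g = (-1)^pb.dim * (minpoly ℚ ζ).coeff 0 := by
    have := Algebra.PowerBasis.norm_gen_eq_coeff_zero_minpoly pb
    rw [hpbg, minpoly_gen ℚ ζ] at this
    exact this
  have hcoeffQ : |(minpoly ℚ ζ).coeff 0| ≤ 1 ∧ (minpoly ℚ ζ).coeff 0 ≠ 0 := by
    constructor
    · have : |(Algebra.norm ℚ g : ℚ)| = |(minpoly ℚ ζ).coeff 0| := by
        rw [hpc, abs_mul, abs_pow, abs_neg, abs_one, one_pow, one_mul]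
      rwa [this] at habsnorm
    · intro h0
      apply hnorm0
      rw [hpc, h0, mul_zero]
  have hmapeq : minpoly ℚ ζ = (minpoly ℤ ζ).map (algebraMap ℤ ℚ) :=
    minpoly.isIntegrallyClosed_eq_field_fractions ℚ ℝ hint
  have hcoeffZ : ((minpoly ℤ ζ).coeff 0 : ℚ) = (minpoly ℚ ζ).coeff 0 := by
    rw [hmapeq, Polynomial.coeff_map]
    rfl
  set a₀ : ℤ := (minpoly ℤ ζ).coeff 0 with ha₀
  have h1 : |a₀| ≤ 1 := by
    have h2 : |(a₀:ℚ)| ≤ 1 := by rw [hcoeffZ]; exact hcoeffQ.1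
    have h3 : ((|a₀|:ℤ):ℚ) = |(a₀:ℚ)| := by push_cast; rfl
    exact_mod_cast h3 ▸ h2
  have h2 : a₀ ≠ 0 := by
    intro h0
    apply hcoeffQ.2
    rw [← hcoeffZ, h0]
    norm_num
  have h3 : a₀ = 1 ∨ a₀ = -1 := by
    have := abs_le.mp h1
    omega
  exact ⟨⟨hζ1, hint, hconj⟩, h3⟩
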